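/- Let d ≥ 1, ρ > 0, M₀ > 0, and β ∈ (0, ρ/(ρ+d)). Let f : ℝ^d → [0, ∞) be a measurable probability density (∫_{ℝ^d} f = 1) with ∫_{ℝ^d} ‖x‖^ρ f(x) dx ≤ M₀. Then the integral J := ∫_{ℝ^d} (1 + ‖x‖^ρ)^{−(1−β)/β} dx is finite, and for every δ > 0, ∫_{{x : f(x) ≤ δ}} f(x) dx ≤ δ^β · (1 + M₀)^{1−β} · J^β. -/

import Mathlib

open MeasureTheory
open scoped ENNReal

noncomputable section

theorem stmt7 (d : ℕ) (hd : 1 ≤ d) (ρ M₀ β : ℝ) (hρ : 0 < ρ) (hM : 0 < M₀)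
    (hβ : β ∈ Set.Ioo 0 (ρ / (ρ + (d : ℝ))))
    (f : EuclideanSpace ℝ (Fin d) → ℝ) (hmeas : Measurable f) (hpos : ∀ x, 0 ≤ f x)
    (hone : ∫⁻ x, ENNReal.ofReal (f x) = 1)
    (hmom : ∫⁻ x, ENNReal.ofReal (‖x‖ ^ ρ * f x) ≤ ENNReal.ofReal M₀) :
    Integrable (fun x : EuclideanSpace ℝ (Fin d) => (1 + ‖x‖ ^ ρ) ^ (-((1 - β) / β))) ∧
    ∀ δ : ℝ, 0 < δ →
      (∫ x in {x | f x ≤ δ}, f x) ≤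
        δ ^ β * (1 + M₀) ^ (1 - β) *
          (∫ x : EuclideanSpace ℝ (Fin d), (1 + ‖x‖ ^ ρ) ^ (-((1 - β) / β))) ^ β := by
  obtain ⟨hβ0, hβρ⟩ := hβ
  have hdpos : (0:ℝ) < (d:ℝ) := by exact_mod_cast Nat.pos_of_ne_zero (by omega)
  have hd' : (0:ℝ) < ρ + d := by linarith
  have hβ1 : β < 1 := lt_of_lt_of_le hβρ (by rw [div_le_one hd']; linarith)
  set s : ℝ := (1 - β) / β with hs_def
  have hs : 0 < s := div_pos (by linarith) hβ0
  have hsβ : s * β = 1 - β := div_mul_cancel₀ _ (ne_of_gt hβ0)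
  have hdrs : (d:ℝ) < ρ * s := by
    have h1 : β * (ρ + d) < ρ := (lt_div_iff₀ hd').mp hβρ
    rw [hs_def, ← mul_div_assoc, lt_div_iff₀ hβ0]
    nlinarith
  -- continuity / measurability of the weight
  have hRcont : Continuous (fun x : EuclideanSpace ℝ (Fin d) => 1 + ‖x‖ ^ ρ) :=
    continuous_const.add (continuous_norm.rpow_const (fun x => Or.inr hρ.le))
  have hWcont : Continuous (fun x : EuclideanSpace ℝ (Fin d) => (1 + ‖x‖ ^ ρ) ^ (-s)) := by
    apply hRcont.rpow_const
    intro x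
    left
    have : (0:ℝ) ≤ ‖x‖ ^ ρ := Real.rpow_nonneg (norm_nonneg x) ρ
    positivity
  have hRpos : ∀ x : EuclideanSpace ℝ (Fin d), (0:ℝ) < 1 + ‖x‖ ^ ρ := by
    intro x
    have : (0:ℝ) ≤ ‖x‖ ^ ρ := Real.rpow_nonneg (norm_nonneg x) ρ
    linarith
  -- integrability of the weight
  have hint : Integrable (fun x : EuclideanSpace ℝ (Fin d) => (1 + ‖x‖ ^ ρ) ^ (-s)) := by
    have hfin : ((Module.finrank ℝ (EuclideanSpace ℝ (Fin d))) : ℝ) < ρ * s := by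
      rwa [finrank_euclideanSpace_fin]
    have hbase : Integrable
        (fun x : EuclideanSpace ℝ (Fin d) => (2:ℝ) ^ (ρ*s) * (1 + ‖x‖) ^ (-(ρ*s))) :=
      (integrable_one_add_norm hfin).const_mul _
    refine hbase.mono' hWcont.aestronglyMeasurable (Filter.Eventually.of_forall fun x => ?_)
    have h1 : (0:ℝ) ≤ ‖x‖ := norm_nonneg x
    have hrpos := hRpos x
    have h2pos : (0:ℝ) < (2:ℝ) ^ ρ := Real.rpow_pos_of_pos two_pos ρ
    have hxρ : (0:ℝ) ≤ ‖x‖ ^ ρ := Real.rpow_nonneg h1 ρ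
    have h2 : (1+‖x‖) ^ ρ ≤ 2 ^ ρ * (1 + ‖x‖ ^ ρ) := by
      rcases le_total ‖x‖ 1 with h | h
      · have hle : (1+‖x‖) ^ ρ ≤ (2:ℝ) ^ ρ :=
          Real.rpow_le_rpow (by linarith) (by linarith) hρ.le
        nlinarith
      · have hle : (1+‖x‖) ^ ρ ≤ (2*‖x‖) ^ ρ :=
          Real.rpow_le_rpow (by linarith) (by linarith) hρ.le
        rw [Real.mul_rpow (by norm_num) h1] at hle
        nlinarith
    have hb : (1+‖x‖) ^ (ρ*s) ≤ 2 ^ (ρ*s) * (1 + ‖x‖ ^ ρ) ^ s := by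
      calc (1+‖x‖) ^ (ρ*s) = ((1+‖x‖) ^ ρ) ^ s := Real.rpow_mul (by linarith) _ _
        _ ≤ (2 ^ ρ * (1 + ‖x‖ ^ ρ)) ^ s :=
            Real.rpow_le_rpow (Real.rpow_nonneg (by linarith) ρ) h2 hs.le
        _ = 2 ^ (ρ*s) * (1 + ‖x‖ ^ ρ) ^ s := by
            rw [Real.mul_rpow h2pos.le hrpos.le, ← Real.rpow_mul (by norm_num)]
    have hW0 : (0:ℝ) ≤ (1 + ‖x‖ ^ ρ) ^ (-s) := Real.rpow_nonneg hrpos.le _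
    rw [Real.norm_of_nonneg hW0, Real.rpow_neg hrpos.le, Real.rpow_neg (by linarith)]
    rw [← div_eq_mul_inv, inv_eq_one_div]
    rw [div_le_div_iff₀ (Real.rpow_pos_of_pos hrpos s) (Real.rpow_pos_of_pos (by linarith) _)]
    nlinarith
  refine ⟨hint, ?_⟩
  intro δ hδ
  -- notation
  set A : Set (EuclideanSpace ℝ (Fin d)) := {x | f x ≤ δ} with hA_def
  have hA : MeasurableSet A := measurableSet_le hmeas measurable_const
  set F : EuclideanSpace ℝ (Fin d) → ℝ≥0∞ := fun x => ENNReal.ofReal (f x) with hF_def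
  have hFmeas : Measurable F := hmeas.ennreal_ofReal
  set W : EuclideanSpace ℝ (Fin d) → ℝ := fun x => (1 + ‖x‖ ^ ρ) ^ (-s) with hW_def
  have hWmeas : Measurable W := hWcont.measurable
  have hW0 : ∀ x, 0 ≤ W x := fun x => Real.rpow_nonneg (hRpos x).le _
  set G : EuclideanSpace ℝ (Fin d) → ℝ≥0∞ :=
    fun x => F x * ENNReal.ofReal (1 + ‖x‖ ^ ρ) with hG_def
  set H : EuclideanSpace ℝ (Fin d) → ℝ≥0∞ := fun x => F x * ENNReal.ofReal (W x) with hH_def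
  have hGmeas : Measurable G := hFmeas.mul hRcont.measurable.ennreal_ofReal
  have hHmeas : Measurable H := hFmeas.mul hWmeas.ennreal_ofReal
  -- pointwise factorization
  have key : ∀ x, F x = (G x) ^ (1-β) * (H x) ^ β := by
    intro x
    have hrpos := hRpos x
    rw [hG_def, hH_def]
    simp only []
    rw [ENNReal.mul_rpow_of_nonneg _ _ (by linarith : (0:ℝ) ≤ 1 - β),
      ENNReal.mul_rpow_of_nonneg _ _ hβ0.le]
    have e1 : F x ^ (1-β) * F x ^ β = F x := by
      rw [← ENNReal.rpow_add_of_nonneg _ _ (by linarith) hβ0.le]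
      norm_num
    have e2 : ENNReal.ofReal (1 + ‖x‖ ^ ρ) ^ (1-β) * ENNReal.ofReal (W x) ^ β = 1 := by
      rw [ENNReal.ofReal_rpow_of_nonneg hrpos.le (by linarith : (0:ℝ) ≤ 1 - β),
        ENNReal.ofReal_rpow_of_nonneg (hW0 x) hβ0.le, ← ENNReal.ofReal_mul
          (Real.rpow_nonneg hrpos.le _)]
      rw [hW_def]
      simp only []
      rw [← Real.rpow_mul hrpos.le, ← Real.rpow_add hrpos,
        show 1 - β + -s * β = 0 by rw [neg_mul, hsβ]; ring,
        Real.rpow_zero, ENNReal.ofReal_one]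
    calc F x = F x * 1 := (mul_one _).symm
      _ = (F x ^ (1-β) * F x ^ β) *
          (ENNReal.ofReal (1 + ‖x‖ ^ ρ) ^ (1-β) * ENNReal.ofReal (W x) ^ β) := by
          rw [e1, e2]
      _ = F x ^ (1-β) * ENNReal.ofReal (1 + ‖x‖ ^ ρ) ^ (1-β) *
          (F x ^ β * ENNReal.ofReal (W x) ^ β) := by ring
  -- Hölder
  have hconj : (1/(1-β)).HolderConjugate (1/β) := by
    rw [Real.holderConjugate_iff]; constructor
    · rw [lt_div_iff₀ (by linarith : (0:ℝ) < 1 - β)]; linarith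
    · rw [one_div, one_div, inv_inv, inv_inv]; ring
  have holder := ENNReal.lintegral_mul_le_Lp_mul_Lq (volume.restrict A) hconj
    ((hGmeas.pow_const (1-β)).aemeasurable) ((hHmeas.pow_const β).aemeasurable)
  have holder' : ∫⁻ x in A, F x ≤
      (∫⁻ x in A, G x) ^ (1-β) * (∫⁻ x in A, H x) ^ β := by
    have e3 : ∀ x, (G x ^ (1-β)) ^ (1/(1-β)) = G x := by
      intro x
      rw [← ENNReal.rpow_mul, mul_one_div, div_self (by linarith : (1:ℝ)-β ≠ 0),
        ENNReal.rpow_one]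
    have e4 : ∀ x, (H x ^ β) ^ (1/β) = H x := by
      intro x
      rw [← ENNReal.rpow_mul, mul_one_div, div_self (ne_of_gt hβ0), ENNReal.rpow_one]
    calc ∫⁻ x in A, F x = ∫⁻ x in A, (G x) ^ (1-β) * (H x) ^ β := by
          apply lintegral_congr; intro x; exact key x
      _ ≤ (∫⁻ x in A, (G x ^ (1-β)) ^ (1/(1-β))) ^ (1/(1/(1-β))) *
          (∫⁻ x in A, (H x ^ β) ^ (1/β)) ^ (1/(1/β)) := holder
      _ = (∫⁻ x in A, G x) ^ (1-β) * (∫⁻ x in A, H x) ^ β := by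
          rw [lintegral_congr e3, lintegral_congr e4, one_div_one_div, one_div_one_div]
  -- bound on ∫ G
  have hG_bound : ∫⁻ x in A, G x ≤ ENNReal.ofReal (1 + M₀) := by
    calc ∫⁻ x in A, G x ≤ ∫⁻ x, G x := setLIntegral_le_lintegral A G
      _ = ∫⁻ x, (ENNReal.ofReal (f x) + ENNReal.ofReal (‖x‖ ^ ρ * f x)) := by
          apply lintegral_congr; intro x
          rw [hG_def, hF_def]
          simp only []
          rw [← ENNReal.ofReal_mul (hpos x), ← ENNReal.ofReal_add (hpos x)
            (mul_nonneg (Real.rpow_nonneg (norm_nonneg x) ρ) (hpos x))]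
          congr 1
          ring
      _ = (∫⁻ x, ENNReal.ofReal (f x)) + ∫⁻ x, ENNReal.ofReal (‖x‖ ^ ρ * f x) :=
          lintegral_add_left hmeas.ennreal_ofReal _
      _ ≤ 1 + ENNReal.ofReal M₀ := by
          rw [hone]
          exact add_le_add_right hmom 1
      _ = ENNReal.ofReal (1 + M₀) := by
          rw [ENNReal.ofReal_add zero_le_one hM.le, ENNReal.ofReal_one]
  -- bound on ∫ H
  have hH_bound : ∫⁻ x in A, H x ≤ ENNReal.ofReal δ * ∫⁻ x, ENNReal.ofReal (W x) := by
    calc ∫⁻ x in A, H x ≤ ∫⁻ x in A, ENNReal.ofReal δ * ENNReal.ofReal (W x) := by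
          apply setLIntegral_mono (measurable_const.mul hWmeas.ennreal_ofReal)
          intro x hx
          exact mul_le_mul_left (ENNReal.ofReal_le_ofReal hx) _
      _ = ENNReal.ofReal δ * ∫⁻ x in A, ENNReal.ofReal (W x) := by
          rw [lintegral_const_mul _ hWmeas.ennreal_ofReal]
      _ ≤ ENNReal.ofReal δ * ∫⁻ x, ENNReal.ofReal (W x) :=
          mul_le_mul_right (setLIntegral_le_lintegral A _) _
  -- identify the lintegral of W with its Bochner integral
  set J : ℝ := ∫ x, W x with hJ_def
  have hJ0 : 0 ≤ J := integral_nonneg hW0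
  have hWfin : ∫⁻ x, ENNReal.ofReal (W x) < ⊤ :=
    (hasFiniteIntegral_iff_ofReal (Filter.Eventually.of_forall hW0)).mp hint.hasFiniteIntegral
  have hJeq : ENNReal.ofReal J = ∫⁻ x, ENNReal.ofReal (W x) := by
    rw [hJ_def, integral_eq_lintegral_of_nonneg_ae (Filter.Eventually.of_forall hW0)
      hint.aestronglyMeasurable, ENNReal.ofReal_toReal hWfin.ne]
  -- combine
  have main : ∫⁻ x in A, F x ≤ ENNReal.ofReal (δ ^ β * (1 + M₀) ^ (1-β) * J ^ β) := by
    calc ∫⁻ x in A, F x ≤ (∫⁻ x in A, G x) ^ (1-β) * (∫⁻ x in A, H x) ^ β := holder'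
      _ ≤ (ENNReal.ofReal (1 + M₀)) ^ (1-β) *
          (ENNReal.ofReal δ * ENNReal.ofReal J) ^ β := by
          apply mul_le_mul'
          · exact ENNReal.rpow_le_rpow hG_bound (by linarith)
          · refine ENNReal.rpow_le_rpow ?_ hβ0.le
            rw [hJeq]; exact hH_bound
      _ = ENNReal.ofReal (δ ^ β * (1 + M₀) ^ (1-β) * J ^ β) := by
          rw [← ENNReal.ofReal_mul hδ.le,
            ENNReal.ofReal_rpow_of_nonneg (by linarith : (0:ℝ) ≤ 1 + M₀) (by linarith),
            ENNReal.ofReal_rpow_of_nonneg (mul_nonneg hδ.le hJ0) hβ0.le,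
            ← ENNReal.ofReal_mul (Real.rpow_nonneg (by linarith) _)]
          congr 1
          rw [Real.mul_rpow hδ.le hJ0]
          ring
  -- convert to Bochner integrals
  have hLHS : ∫ x in A, f x = (∫⁻ x in A, F x).toReal := by
    rw [integral_eq_lintegral_of_nonneg_ae (Filter.Eventually.of_forall hpos)
      (hmeas.aestronglyMeasurable.restrict)]
  rw [hLHS]
  exact ENNReal.toReal_le_of_le_ofReal (by positivity) main
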